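/- Let H be a real Hilbert space with orthogonal projection P onto a closed subspace, let f, g ∈ H be nonzero, set S = ‖Pf‖²/‖f‖², Ŝ = ‖Pg‖²/‖g‖², and ε = ‖f − g‖/‖f‖. Then |S − Ŝ| ≤ min(1, ε + 2√S) · ε. -/

import Mathlib

open Real RealInnerProductSpace

private lemma sq_le_aux {x y : ℝ} (hx : 0 ≤ x) (hy : 0 ≤ y) (h : x ^ 2 ≤ y ^ 2) : x ≤ y := by
  nlinarith

private lemma amgm_aux {X A B C D m n : ℝ} (hX0 : 0 ≤ X) (hA : 0 ≤ A) (hB : 0 ≤ B)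
    (hC : 0 ≤ C) (hD : 0 ≤ D) (hm : 0 ≤ m) (hn : 0 ≤ n)
    (X1 : X ≤ A * B) (X2 : X ≤ C * D)
    (e1 : m ^ 2 = A ^ 2 + C ^ 2) (e2 : n ^ 2 = B ^ 2 + D ^ 2) : X ≤ m * n / 2 := by
  have h4 : X * X ≤ (A * B) * (C * D) := mul_le_mul X1 X2 hX0 (mul_nonneg hA hB)
  have h5 : (2 * X) ^ 2 ≤ (m * n) ^ 2 := by
    have hmn : (m * n) ^ 2 = (A ^ 2 + C ^ 2) * (B ^ 2 + D ^ 2) := by rw [mul_pow, e1, e2]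
    nlinarith [sq_nonneg (A * B - C * D), sq_nonneg (A * D - C * B)]
  have h6 : 2 * X ≤ m * n := sq_le_aux (by linarith) (mul_nonneg hm hn) h5
  linarith

private lemma proj_norm_le {H : Type*} [NormedAddCommGroup H] [InnerProductSpace ℝ H]
    (K : Submodule ℝ H) [CompleteSpace K] (x : H) :
    ‖(K.orthogonalProjection x : H)‖ ≤ ‖x‖ := by
  have h1 : ‖K.orthogonalProjection x‖ ≤ ‖K.orthogonalProjection‖ * ‖x‖ :=
    (K.orthogonalProjection).le_opNorm x
  have h2 := Submodule.orthogonalProjectionOnto_norm_le K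
  have h3 : ‖(K.orthogonalProjection x : H)‖ = ‖K.orthogonalProjection x‖ := rfl
  nlinarith [norm_nonneg x]

private lemma proj_sq_diff_le {H : Type*} [NormedAddCommGroup H] [InnerProductSpace ℝ H]
    (K : Submodule ℝ H) [CompleteSpace K] (u v : H) (huv : ‖u‖ = ‖v‖) :
    |‖(K.orthogonalProjection u : H)‖ ^ 2 - ‖(K.orthogonalProjection v : H)‖ ^ 2|
      ≤ ‖u - v‖ * ‖u + v‖ / 2 := by
  set p : H := (K.orthogonalProjection u : H) with hp
  set q : H := (K.orthogonalProjection v : H) with hq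
  set p' : H := u - p with hp'
  set q' : H := v - q with hq'
  have hpK : p ∈ K := SetLike.coe_mem _
  have hqK : q ∈ K := SetLike.coe_mem _
  have hp'K : p' ∈ Kᗮ := K.sub_starProjection_mem_orthogonal u
  have hq'K : q' ∈ Kᗮ := K.sub_starProjection_mem_orthogonal v
  have h1 : ⟪p - q, p' - q'⟫ = 0 :=
    Submodule.inner_right_of_mem_orthogonal (Submodule.sub_mem K hpK hqK)
      (Submodule.sub_mem _ hp'K hq'K)
  have h2 : ⟪p + q, p' + q'⟫ = 0 :=
    Submodule.inner_right_of_mem_orthogonal (Submodule.add_mem K hpK hqK)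
      (Submodule.add_mem _ hp'K hq'K)
  have hpp' : ⟪p, p'⟫ = 0 := Submodule.inner_right_of_mem_orthogonal hpK hp'K
  have hqq' : ⟪q, q'⟫ = 0 := Submodule.inner_right_of_mem_orthogonal hqK hq'K
  have hudec : u = p + p' := by rw [hp']; abel
  have hvdec : v = q + q' := by rw [hq']; abel
  have hu2 : ‖u‖ ^ 2 = ‖p‖ ^ 2 + ‖p'‖ ^ 2 := by
    rw [hudec, norm_add_sq_real, hpp']; ring
  have hv2 : ‖v‖ ^ 2 = ‖q‖ ^ 2 + ‖q'‖ ^ 2 := by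
    rw [hvdec, norm_add_sq_real, hqq']; ring
  have hsubdec : u - v = (p - q) + (p' - q') := by rw [hp', hq']; abel
  have haddec : u + v = (p + q) + (p' + q') := by rw [hp', hq']; abel
  have e1 : ‖u - v‖ ^ 2 = ‖p - q‖ ^ 2 + ‖p' - q'‖ ^ 2 := by
    rw [hsubdec, norm_add_sq_real, h1]; ring
  have e2 : ‖u + v‖ ^ 2 = ‖p + q‖ ^ 2 + ‖p' + q'‖ ^ 2 := by
    rw [haddec, norm_add_sq_real, h2]; ring
  have key1 : ‖p‖ ^ 2 - ‖q‖ ^ 2 = ⟪p - q, p + q⟫ := by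
    rw [inner_sub_left, inner_add_right, inner_add_right, real_inner_self_eq_norm_sq,
      real_inner_self_eq_norm_sq, real_inner_comm q p]
    ring
  have key2 : ‖p'‖ ^ 2 - ‖q'‖ ^ 2 = ⟪p' - q', p' + q'⟫ := by
    rw [inner_sub_left, inner_add_right, inner_add_right, real_inner_self_eq_norm_sq,
      real_inner_self_eq_norm_sq, real_inner_comm q' p']
    ring
  have huv2 : ‖u‖ ^ 2 = ‖v‖ ^ 2 := by rw [huv]
  have X1 : |‖p‖ ^ 2 - ‖q‖ ^ 2| ≤ ‖p - q‖ * ‖p + q‖ := by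
    rw [key1]; exact abs_real_inner_le_norm _ _
  have X2 : |‖p‖ ^ 2 - ‖q‖ ^ 2| ≤ ‖p' - q'‖ * ‖p' + q'‖ := by
    have hneg : ‖p‖ ^ 2 - ‖q‖ ^ 2 = -(‖p'‖ ^ 2 - ‖q'‖ ^ 2) := by linarith
    rw [hneg, abs_neg, key2]
    exact abs_real_inner_le_norm _ _
  exact amgm_aux (abs_nonneg _) (norm_nonneg _) (norm_nonneg _) (norm_nonneg _)
    (norm_nonneg _) (norm_nonneg _) (norm_nonneg _) X1 X2 e1 e2

private lemma proj_norm_sub_le {H : Type*} [NormedAddCommGroup H] [InnerProductSpace ℝ H]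
    (K : Submodule ℝ H) [CompleteSpace K] (u v : H) (hu : ‖u‖ = 1) (hv : ‖v‖ = 1) :
    ‖(K.orthogonalProjection v : H)‖
      ≤ ‖(K.orthogonalProjection u : H)‖ + ‖v - ⟪u, v⟫ • u‖ := by
  set c := ⟪u, v⟫ with hc
  have hc1 : |c| ≤ 1 := by
    have := abs_real_inner_le_norm u v
    rw [hu, hv] at this; simpa using this
  set w : H := v - c • u with hw
  have hvdec : v = c • u + w := by rw [hw]; abel
  have hPv : (K.orthogonalProjection v : H)
      = c • (K.orthogonalProjection u : H) + (K.orthogonalProjection w : H) := by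
    conv_lhs => rw [hvdec]
    rw [map_add, map_smul]
    rfl
  calc ‖(K.orthogonalProjection v : H)‖
      ≤ ‖c • (K.orthogonalProjection u : H)‖ + ‖(K.orthogonalProjection w : H)‖ := by
        rw [hPv]; exact norm_add_le _ _
    _ ≤ ‖(K.orthogonalProjection u : H)‖ + ‖w‖ := by
        rw [norm_smul, Real.norm_eq_abs]
        have h1 := proj_norm_le K w
        have h2 : |c| * ‖(K.orthogonalProjection u : H)‖ ≤ ‖(K.orthogonalProjection u : H)‖ := by
          nlinarith [norm_nonneg (K.orthogonalProjection u : H), abs_nonneg c]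
        linarith

private lemma final_aux {a b ε : ℝ} (ha0 : 0 ≤ a) (hb0 : 0 ≤ b) (hε0 : 0 ≤ ε)
    (h1 : b ≤ a + ε) (h2 : a ≤ b + ε) : |a ^ 2 - b ^ 2| ≤ (ε + 2 * a) * ε := by
  rw [abs_le]
  constructor
  · nlinarith [mul_nonneg hε0 ha0, mul_nonneg hε0 hb0]
  · nlinarith [mul_nonneg hε0 ha0, mul_nonneg hε0 hb0]
set_option maxHeartbeats 1000000 in
theorem stmt_19 {H : Type*} [NormedAddCommGroup H] [InnerProductSpace ℝ H] [CompleteSpace H]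
    (K : Submodule ℝ H) [CompleteSpace K]
    (f g : H) (hf : f ≠ 0) (hg : g ≠ 0)
    (S Shat ε : ℝ)
    (hS : S = ‖(K.orthogonalProjection f : H)‖ ^ 2 / ‖f‖ ^ 2)
    (hShat : Shat = ‖(K.orthogonalProjection g : H)‖ ^ 2 / ‖g‖ ^ 2)
    (hε : ε = ‖f - g‖ / ‖f‖) :
    |S - Shat| ≤ min 1 (ε + 2 * Real.sqrt S) * ε := by
  have hF : (0:ℝ) < ‖f‖ := norm_pos_iff.mpr hf
  have hG : (0:ℝ) < ‖g‖ := norm_pos_iff.mpr hg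
  set u : H := ‖f‖⁻¹ • f with hu_def
  set v : H := ‖g‖⁻¹ • g with hv_def
  have hu : ‖u‖ = 1 := by
    rw [hu_def, norm_smul, Real.norm_eq_abs, abs_of_pos (inv_pos.mpr hF)]
    field_simp
  have hv : ‖v‖ = 1 := by
    rw [hv_def, norm_smul, Real.norm_eq_abs, abs_of_pos (inv_pos.mpr hG)]
    field_simp
  set a := ‖(K.orthogonalProjection u : H)‖ with ha_def
  set b := ‖(K.orthogonalProjection v : H)‖ with hb_def
  have ha0 : 0 ≤ a := norm_nonneg _
  have hb0 : 0 ≤ b := norm_nonneg _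
  have hPu : (K.orthogonalProjection u : H) = ‖f‖⁻¹ • (K.orthogonalProjection f : H) := by
    rw [hu_def, map_smul]; rfl
  have hPv : (K.orthogonalProjection v : H) = ‖g‖⁻¹ • (K.orthogonalProjection g : H) := by
    rw [hv_def, map_smul]; rfl
  have ha : a = ‖f‖⁻¹ * ‖(K.orthogonalProjection f : H)‖ := by
    rw [ha_def, hPu, norm_smul, Real.norm_eq_abs, abs_of_pos (inv_pos.mpr hF)]
  have hb : b = ‖g‖⁻¹ * ‖(K.orthogonalProjection g : H)‖ := by
    rw [hb_def, hPv, norm_smul, Real.norm_eq_abs, abs_of_pos (inv_pos.mpr hG)]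
  have hS' : S = a ^ 2 := by rw [hS, ha]; field_simp
  have hShat' : Shat = b ^ 2 := by rw [hShat, hb]; field_simp
  have hsqrtS : Real.sqrt S = a := by rw [hS', Real.sqrt_sq ha0]
  have hε0 : 0 ≤ ε := by rw [hε]; positivity
  set c := ⟪u, v⟫ with hc_def
  clear_value u v a b c
  have hinner : ⟪f, g⟫ = ‖f‖ * ‖g‖ * c := by
    rw [hc_def, hu_def, hv_def, real_inner_smul_left, real_inner_smul_right]
    field_simp
  have hfg2 : ‖f - g‖ ^ 2 = ‖f‖ ^ 2 - 2 * (‖f‖ * ‖g‖ * c) + ‖g‖ ^ 2 := by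
    rw [norm_sub_sq_real, hinner]
  have hε2 : ε ^ 2 * ‖f‖ ^ 2 = ‖f - g‖ ^ 2 := by
    rw [hε]; field_simp
  have fact1 : 1 - c ^ 2 ≤ ε ^ 2 := by
    nlinarith [sq_nonneg (‖g‖ - ‖f‖ * c), mul_pos hF hF, sq_nonneg ‖f‖]
  -- |a - b| ≤ ε via decompositions
  have hwv : ‖v - c • u‖ ≤ ε := by
    have e1 : ⟪v, c • u⟫ = c * c := by
      rw [real_inner_smul_right, real_inner_comm, ← hc_def]
    have e2 : ‖c • u‖ ^ 2 = c ^ 2 := by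
      rw [norm_smul, hu, Real.norm_eq_abs, mul_one, sq_abs]
    have h1 : ‖v - c • u‖ ^ 2 = 1 - c ^ 2 := by
      rw [norm_sub_sq_real, e1, e2, hv]; ring
    exact sq_le_aux (norm_nonneg _) hε0 (by rw [h1]; exact fact1)
  have hwu : ‖u - ⟪v, u⟫ • v‖ ≤ ε := by
    have e0 : ⟪v, u⟫ = c := by rw [real_inner_comm, ← hc_def]
    have e1 : ⟪u, ⟪v, u⟫ • v⟫ = c * c := by
      rw [real_inner_smul_right, e0, ← hc_def]
    have e2 : ‖⟪v, u⟫ • v‖ ^ 2 = c ^ 2 := by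
      rw [norm_smul, hv, Real.norm_eq_abs, mul_one, sq_abs, e0]
    have h1 : ‖u - ⟪v, u⟫ • v‖ ^ 2 = 1 - c ^ 2 := by
      rw [norm_sub_sq_real, e1, e2, hu]; ring
    exact sq_le_aux (norm_nonneg _) hε0 (by rw [h1]; exact fact1)
  have fact2a : b ≤ a + ε := by
    have := proj_norm_sub_le K u v hu hv
    rw [← hc_def, ← ha_def, ← hb_def] at this
    calc b ≤ a + ‖v - c • u‖ := this
      _ ≤ a + ε := by linarith
  have fact2b : a ≤ b + ε := by
    have := proj_norm_sub_le K v u hv hu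
    rw [← ha_def, ← hb_def] at this
    calc a ≤ b + ‖u - ⟪v, u⟫ • v‖ := this
      _ ≤ b + ε := by linarith
  -- |a² - b²| ≤ ε
  have fact3 : |a ^ 2 - b ^ 2| ≤ ε := by
    have h1 := proj_sq_diff_le K u v (by rw [hu, hv])
    rw [← ha_def, ← hb_def] at h1
    have hm2 : ‖u - v‖ ^ 2 = 2 - 2 * c := by
      rw [norm_sub_sq_real, hu, hv, ← hc_def]; ring
    have hn2 : ‖u + v‖ ^ 2 = 2 + 2 * c := by
      rw [norm_add_sq_real, hu, hv, ← hc_def]; ring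
    have h2 : (‖u - v‖ * ‖u + v‖ / 2) ^ 2 ≤ ε ^ 2 := by
      have : (‖u - v‖ * ‖u + v‖ / 2) ^ 2 = ‖u - v‖ ^ 2 * ‖u + v‖ ^ 2 / 4 := by ring
      rw [this, hm2, hn2]
      have e : (2 - 2 * c) * (2 + 2 * c) / 4 = 1 - c ^ 2 := by ring
      rw [e]; exact fact1
    have h3 : ‖u - v‖ * ‖u + v‖ / 2 ≤ ε :=
      sq_le_aux (by positivity) hε0 h2
    linarith [abs_nonneg (a ^ 2 - b ^ 2), h1]
  rw [hsqrtS, hS', hShat']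
  rcases le_total (1:ℝ) (ε + 2 * a) with hmin | hmin
  · rw [min_eq_left hmin, one_mul]
    exact fact3
  · rw [min_eq_right hmin]
    exact final_aux ha0 hb0 hε0 fact2a fact2b
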